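/- arXiv:2504.04165 — 6 statements merged into one kernel-verified Lean document; each statement's English description precedes it below -/
import Mathlib

section
/- Let B : ℝ³ → ℝ³ be locally Lipschitz continuous. Then for every x₀, v₀ ∈ ℝ³ and every ω ∈ ℝ, the initial value problem x''(t) = ω x'(t) × B(x(t)), x(0) = x₀, x'(0) = v₀ admits a unique solution x : ℝ → ℝ³ defined for all times t ∈ ℝ; moreover x is twice continuously differentiable with locally Lipschitz second derivative. -/
noncomputable section

open Real Filter Topology MeasureTheory intervalIntegral Bornology

abbrev E3 : Type := EuclideanSpace ℝ (Fin 3)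

def cross3 (u v : E3) : E3 :=
  (WithLp.equiv 2 (Fin 3 → ℝ)).symm
    ![u 1 * v 2 - u 2 * v 1, u 2 * v 0 - u 0 * v 2, u 0 * v 1 - u 1 * v 0]

def divg (F : E3 → E3) (y : E3) : ℝ :=
  ∑ i : Fin 3, fderiv ℝ F y (EuclideanSpace.single i (1:ℝ)) i

def curl3 (F : E3 → E3) (y : E3) : E3 :=
  (WithLp.equiv 2 (Fin 3 → ℝ)).symm
    ![fderiv ℝ F y (EuclideanSpace.single 1 (1:ℝ)) 2 - fderiv ℝ F y (EuclideanSpace.single 2 (1:ℝ)) 1,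
      fderiv ℝ F y (EuclideanSpace.single 2 (1:ℝ)) 0 - fderiv ℝ F y (EuclideanSpace.single 0 (1:ℝ)) 2,
      fderiv ℝ F y (EuclideanSpace.single 0 (1:ℝ)) 1 - fderiv ℝ F y (EuclideanSpace.single 1 (1:ℝ)) 0]

def bdir (B : E3 → E3) (y : E3) : E3 := ‖B y‖⁻¹ • B y

def IsLorentzSol (B : E3 → E3) (ω : ℝ) (x₀ v₀ : E3) (x : ℝ → E3) : Prop :=
  x 0 = x₀ ∧ deriv x 0 = v₀ ∧ Differentiable ℝ x ∧
    ∀ t : ℝ, HasDerivAt (deriv x) (ω • cross3 (deriv x t) (B (x t))) t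

def IsLimitSol (B : E3 → E3) (x₀ v₀ : E3) (x : ℝ → E3) (h : ℝ → ℝ) : Prop :=
  x 0 = x₀ ∧ h 0 = (inner ℝ v₀ (bdir B x₀) : ℝ) ∧
    (∀ t : ℝ, HasDerivAt x (h t • bdir B (x t)) t) ∧
    (∀ t : ℝ, HasDerivAt h ((‖v₀‖ ^ 2 - h t ^ 2) / 2 * divg (bdir B) (x t)) t)

def IsCkBounded (k : ℕ) (B : E3 → E3) : Prop :=
  ContDiff ℝ k B ∧ ∀ i ≤ k, ∃ M : ℝ, ∀ y : E3, ‖iteratedFDeriv ℝ i B y‖ ≤ M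

def MinimalGrowth (γ : ℝ) (B : E3 → E3) : Prop :=
  ∃ R C : ℝ, 0 < R ∧ 0 < C ∧ ∀ y : E3, R ≤ ‖y‖ → C / ‖y‖ ^ γ ≤ ‖B y‖


open Set Metric

lemma abs_apply_le_norm (x : E3) (i : Fin 3) : |x i| ≤ ‖x‖ := by
  have h : ‖x‖ ^ 2 = ∑ j : Fin 3, ‖x j‖ ^ 2 := PiLp.norm_sq_eq_of_L2 _ x
  have h2 : ‖x i‖ ^ 2 ≤ ‖x‖ ^ 2 := by
    rw [h]
    exact Finset.single_le_sum (f := fun j => ‖x j‖ ^ 2) (fun j _ => sq_nonneg _)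
      (Finset.mem_univ i)
  rw [Real.norm_eq_abs] at h2
  nlinarith [norm_nonneg x, abs_nonneg (x i)]

lemma norm_cross3_le (u w : E3) : ‖cross3 u w‖ ≤ 4 * ‖u‖ * ‖w‖ := by
  have hb : ∀ i j : Fin 3, |u i * w j| ≤ ‖u‖ * ‖w‖ := fun i j => by
    rw [abs_mul]
    exact mul_le_mul (abs_apply_le_norm u i) (abs_apply_le_norm w j) (abs_nonneg _) (norm_nonneg _)
  have hcomp : ∀ i : Fin 3, ‖cross3 u w i‖ ≤ 2 * (‖u‖ * ‖w‖) := by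
    intro i
    have habs : ∀ a b c d : Fin 3, |u a * w b - u c * w d| ≤ 2 * (‖u‖ * ‖w‖) := by
      intro a b c d
      calc |u a * w b - u c * w d| ≤ |u a * w b| + |u c * w d| := abs_sub _ _
        _ ≤ ‖u‖*‖w‖ + ‖u‖*‖w‖ := add_le_add (hb a b) (hb c d)
        _ = 2 * (‖u‖ * ‖w‖) := by ring
    fin_cases i <;> simpa [cross3, Real.norm_eq_abs] using habs _ _ _ _
  have hsq : ‖cross3 u w‖ ^ 2 ≤ (4 * ‖u‖ * ‖w‖) ^ 2 := by
    have h : ‖cross3 u w‖ ^ 2 = ∑ j : Fin 3, ‖cross3 u w j‖ ^ 2 := PiLp.norm_sq_eq_of_L2 _ _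
    rw [h, Fin.sum_univ_three]
    have e0 := hcomp 0; have e1 := hcomp 1; have e2 := hcomp 2
    have n0 := norm_nonneg (cross3 u w 0); have n1 := norm_nonneg (cross3 u w 1)
    have n2 := norm_nonneg (cross3 u w 2)
    nlinarith [mul_nonneg (norm_nonneg u) (norm_nonneg w)]
  calc ‖cross3 u w‖ = √(‖cross3 u w‖ ^ 2) := (Real.sqrt_sq (norm_nonneg _)).symm
    _ ≤ √((4 * ‖u‖ * ‖w‖) ^ 2) := Real.sqrt_le_sqrt hsq
    _ = 4 * ‖u‖ * ‖w‖ := Real.sqrt_sq (by positivity)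

def crossL : E3 →L[ℝ] E3 →L[ℝ] E3 :=
  LinearMap.mkContinuous₂
    (LinearMap.mk₂ ℝ cross3
      (fun u u' w => by ext i; fin_cases i <;> simp [cross3] <;> ring)
      (fun c u w => by ext i; fin_cases i <;> simp [cross3] <;> ring)
      (fun u w w' => by ext i; fin_cases i <;> simp [cross3] <;> ring)
      (fun c u w => by ext i; fin_cases i <;> simp [cross3] <;> ring))
    4 (fun u w => norm_cross3_le u w)

@[simp] lemma crossL_apply (u w : E3) : crossL u w = cross3 u w := rfl

lemma inner_self_cross3 (u w : E3) : (inner ℝ u (cross3 u w) : ℝ) = 0 := by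
  simp [cross3, PiLp.inner_apply, Fin.sum_univ_three]
  ring

/-- difference estimate for the cross product along two pairs of maps -/
lemma crossL_pair_dist {γ : Type*} [PseudoMetricSpace γ] {u w : γ → E3} {s : Set γ}
    {Ku Kw Mu Mw : ℝ} (hKu : 0 ≤ Ku) (hKw : 0 ≤ Kw)
    (hu : ∀ a ∈ s, ∀ b ∈ s, dist (u a) (u b) ≤ Ku * dist a b)
    (hw : ∀ a ∈ s, ∀ b ∈ s, dist (w a) (w b) ≤ Kw * dist a b)
    (hMu : ∀ a ∈ s, ‖u a‖ ≤ Mu) (hMw : ∀ a ∈ s, ‖w a‖ ≤ Mw)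
    {a b : γ} (ha : a ∈ s) (hb : b ∈ s) :
    dist (crossL (u a) (w a)) (crossL (u b) (w b))
      ≤ (4 * Mw * Ku + 4 * Mu * Kw) * dist a b := by
  have key : crossL (u a) (w a) - crossL (u b) (w b)
      = crossL (u a - u b) (w a) + crossL (u b) (w a - w b) := by
    simp only [map_sub, ContinuousLinearMap.sub_apply, ContinuousLinearMap.map_sub]
    abel
  have h1 : ‖crossL (u a - u b) (w a)‖ ≤ 4 * (Ku * dist a b) * Mw := by
    refine (norm_cross3_le _ _).trans ?_
    have hd : ‖u a - u b‖ ≤ Ku * dist a b := by rw [← dist_eq_norm]; exact hu a ha b hb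
    have := mul_le_mul (mul_le_mul_of_nonneg_left hd (by norm_num : (0:ℝ) ≤ 4))
      (hMw a ha) (norm_nonneg _) (by have := dist_nonneg (x := a) (y := b); positivity)
    linarith [this]
  have h2 : ‖crossL (u b) (w a - w b)‖ ≤ 4 * Mu * (Kw * dist a b) := by
    refine (norm_cross3_le _ _).trans ?_
    have hd : ‖w a - w b‖ ≤ Kw * dist a b := by rw [← dist_eq_norm]; exact hw a ha b hb
    have hMu' : 4 * ‖u b‖ ≤ 4 * Mu := by linarith [hMu b hb]
    have hMu0 : (0:ℝ) ≤ 4 * Mu := by nlinarith [norm_nonneg (u b)]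
    have := mul_le_mul hMu' hd (norm_nonneg _) hMu0
    linarith [this]
  rw [dist_eq_norm, key]
  calc ‖crossL (u a - u b) (w a) + crossL (u b) (w a - w b)‖
      ≤ ‖crossL (u a - u b) (w a)‖ + ‖crossL (u b) (w a - w b)‖ := norm_add_le _ _
    _ ≤ 4 * (Ku * dist a b) * Mw + 4 * Mu * (Kw * dist a b) := add_le_add h1 h2
    _ = (4 * Mw * Ku + 4 * Mu * Kw) * dist a b := by ring

lemma dist_fst_le' {α β : Type*} [PseudoMetricSpace α] [PseudoMetricSpace β] (a b : α × β) :
    dist a.1 b.1 ≤ dist a b := by rw [Prod.dist_eq]; exact le_max_left _ _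

lemma dist_snd_le' {α β : Type*} [PseudoMetricSpace α] [PseudoMetricSpace β] (a b : α × β) :
    dist a.2 b.2 ≤ dist a b := by rw [Prod.dist_eq]; exact le_max_right _ _

section Field

variable (B : E3 → E3) (ω : ℝ)

/-- the first-order field on phase space -/
def Fd : E3 × E3 → E3 × E3 := fun z => (z.2, ω • crossL z.2 (B z.1))

variable {B}
variable (hB : ∀ K : Set E3, IsCompact K → ∃ L : NNReal, LipschitzOnWith L B K)

include hB

lemma B_continuous : Continuous B := by
  rw [continuous_iff_continuousAt]
  intro y
  obtain ⟨L, hL⟩ := hB (closedBall y 1) (isCompact_closedBall y 1)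
  exact hL.continuousOn.continuousAt (closedBall_mem_nhds y one_pos)

lemma Fd_continuous : Continuous (Fd B ω) :=
  continuous_snd.prodMk <| (crossL.continuous₂.comp
    (continuous_snd.prodMk ((B_continuous hB).comp continuous_fst))).const_smul ω

/-- bound for B on balls -/
lemma B_bound (ρ : ℝ) : ∃ M : ℝ, 0 ≤ M ∧ ∀ y : E3, ‖y‖ ≤ ρ → ‖B y‖ ≤ M := by
  obtain ⟨M, hM⟩ := (isCompact_closedBall (0:E3) ρ).exists_bound_of_continuousOn
    (B_continuous hB).continuousOn
  exact ⟨max M 0, le_max_right _ _, fun y hy =>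
    (hM y (mem_closedBall_zero_iff.mpr hy)).trans (le_max_left _ _)⟩

/-- Lipschitz constant for Fd on balls, as a real-valued distance estimate -/
lemma Fd_dist_le (ρ : ℝ) : ∃ C : ℝ, 0 ≤ C ∧ ∀ z ∈ closedBall (0 : E3 × E3) ρ,
    ∀ w ∈ closedBall (0 : E3 × E3) ρ, dist (Fd B ω z) (Fd B ω w) ≤ C * dist z w := by
  obtain ⟨MB, hMB0, hMB⟩ := B_bound hB ρ
  obtain ⟨LB, hLB⟩ := hB (closedBall 0 ρ) (isCompact_closedBall _ _)
  refine ⟨1 + |ω| * (4 * MB * 1 + 4 * (max ρ 0) * LB), by positivity, fun z hz w hw => ?_⟩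
  have hz1 : z.1 ∈ closedBall (0:E3) ρ := mem_closedBall_zero_iff.mpr
    ((norm_fst_le z).trans (mem_closedBall_zero_iff.mp hz))
  have hw1 : w.1 ∈ closedBall (0:E3) ρ := mem_closedBall_zero_iff.mpr
    ((norm_fst_le w).trans (mem_closedBall_zero_iff.mp hw))
  have hcross : dist (crossL z.2 (B z.1)) (crossL w.2 (B w.1))
      ≤ (4 * MB * 1 + 4 * (max ρ 0) * LB) * dist z w := by
    refine crossL_pair_dist (u := fun p : E3 × E3 => p.2) (w := fun p : E3 × E3 => B p.1)
      (s := closedBall (0 : E3 × E3) ρ) zero_le_one LB.coe_nonneg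
      (fun a _ b _ => by simpa [one_mul] using dist_snd_le' a b)
      (fun a ha b hb => ?_) (fun a ha => ?_) (fun a ha => ?_) hz hw
    · refine (hLB.dist_le_mul a.1 (mem_closedBall_zero_iff.mpr
        ((norm_fst_le a).trans (mem_closedBall_zero_iff.mp ha))) b.1
        (mem_closedBall_zero_iff.mpr
        ((norm_fst_le b).trans (mem_closedBall_zero_iff.mp hb)))).trans ?_
      exact mul_le_mul_of_nonneg_left (dist_fst_le' a b) LB.coe_nonneg
    · exact ((norm_snd_le a).trans (mem_closedBall_zero_iff.mp ha)).trans (le_max_left _ _)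
    · exact hMB _ ((norm_fst_le a).trans (mem_closedBall_zero_iff.mp ha))
  have h2 : dist (ω • crossL z.2 (B z.1)) (ω • crossL w.2 (B w.1))
      ≤ |ω| * ((4 * MB * 1 + 4 * (max ρ 0) * LB) * dist z w) := by
    rw [dist_smul₀]
    exact mul_le_mul_of_nonneg_left hcross (abs_nonneg ω)
  calc dist (Fd B ω z) (Fd B ω w)
      ≤ max (dist z.2 w.2) (dist (ω • crossL z.2 (B z.1)) (ω • crossL w.2 (B w.1))) :=
        le_of_eq (Prod.dist_eq)
    _ ≤ (1 + |ω| * (4 * MB * 1 + 4 * (max ρ 0) * LB)) * dist z w := by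
        apply max_le
        · have hc : (0:ℝ) ≤ |ω| * (4 * MB * 1 + 4 * (max ρ 0) * LB) := by positivity
          nlinarith [dist_snd_le' z w, dist_nonneg (x := z) (y := w), hc]
        · nlinarith [h2, dist_nonneg (x := z) (y := w)]

end Field

section Cutoff

/-- scalar cutoff: 1 on the ball of radius R, 0 outside radius R+1 -/
def chi (R : ℝ) (z : E3 × E3) : ℝ := max 0 (min 1 (R + 1 - ‖z‖))

lemma chi_lipschitz (R : ℝ) : LipschitzWith 1 (chi R) := by
  have h1 : LipschitzWith 1 fun z : E3 × E3 => R + 1 - ‖z‖ := by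
    apply LipschitzWith.of_dist_le_mul
    intro z w
    rw [Real.dist_eq, NNReal.coe_one, one_mul]
    have he : (R + 1 - ‖z‖) - (R + 1 - ‖w‖) = ‖w‖ - ‖z‖ := by ring
    rw [he, abs_sub_comm]
    calc |‖z‖ - ‖w‖| ≤ ‖z - w‖ := abs_norm_sub_norm_le z w
      _ = dist z w := (dist_eq_norm z w).symm
  have h2 := LipschitzWith.const_max (h1.min_const 1) 0
  have : chi R = fun z : E3 × E3 => max 0 (min (R + 1 - ‖z‖) 1) := by
    funext z; rw [chi, min_comm]
  rw [this]
  exact h2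

lemma chi_nonneg (R : ℝ) (z : E3 × E3) : 0 ≤ chi R z := le_max_left _ _

lemma chi_le_one (R : ℝ) (z : E3 × E3) : chi R z ≤ 1 := by
  apply max_le zero_le_one
  exact min_le_left _ _

lemma chi_eq_one {R : ℝ} {z : E3 × E3} (h : ‖z‖ ≤ R) : chi R z = 1 := by
  have : min 1 (R + 1 - ‖z‖) = 1 := min_eq_left (by linarith)
  rw [chi, this]; exact max_eq_right zero_le_one

lemma chi_eq_zero {R : ℝ} {z : E3 × E3} (h : R + 1 ≤ ‖z‖) : chi R z = 0 := by
  have : min 1 (R + 1 - ‖z‖) ≤ 0 := (min_le_right _ _).trans (by linarith)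
  rw [chi]; exact max_eq_left this

/-- the truncated field -/
def Fc (B : E3 → E3) (ω R : ℝ) (z : E3 × E3) : E3 × E3 := chi R z • Fd B ω z

end Cutoff

section CutField

variable {B : E3 → E3} (ω : ℝ)
variable (hB : ∀ K : Set E3, IsCompact K → ∃ L : NNReal, LipschitzOnWith L B K)

include hB

lemma Fc_bound (R : ℝ) : ∃ C : ℝ, 0 ≤ C ∧ ∀ z, ‖Fc B ω R z‖ ≤ C := by
  obtain ⟨M0, hM0⟩ := (isCompact_closedBall (0 : E3 × E3) (R+1)).exists_bound_of_continuousOn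
    (Fd_continuous ω hB).continuousOn
  refine ⟨max M0 0, le_max_right _ _, fun z => ?_⟩
  rcases le_or_gt ‖z‖ (R+1) with h | h
  · calc ‖Fc B ω R z‖ = |chi R z| * ‖Fd B ω z‖ := by rw [Fc, norm_smul, Real.norm_eq_abs]
      _ ≤ 1 * max M0 0 := mul_le_mul (abs_le.mpr ⟨by linarith [chi_nonneg R z], chi_le_one R z⟩)
          ((hM0 z (mem_closedBall_zero_iff.mpr h)).trans (le_max_left _ _))
          (norm_nonneg _) zero_le_one
      _ = max M0 0 := one_mul _
  · rw [Fc, chi_eq_zero h.le, zero_smul, norm_zero]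
    exact le_max_right _ _

lemma Fc_dist_le (R ρ : ℝ) : ∃ C : ℝ, 0 ≤ C ∧ ∀ z ∈ closedBall (0 : E3 × E3) ρ,
    ∀ w ∈ closedBall (0 : E3 × E3) ρ, dist (Fc B ω R z) (Fc B ω R w) ≤ C * dist z w := by
  obtain ⟨M0, hM0⟩ := (isCompact_closedBall (0 : E3 × E3) ρ).exists_bound_of_continuousOn
    (Fd_continuous ω hB).continuousOn
  set M := max M0 0 with hMdef
  have hM : ∀ z ∈ closedBall (0 : E3 × E3) ρ, ‖Fd B ω z‖ ≤ M :=
    fun z hz => (hM0 z hz).trans (le_max_left _ _)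
  have hM0' : (0:ℝ) ≤ M := le_max_right _ _
  obtain ⟨C, hC0, hC⟩ := Fd_dist_le ω hB ρ
  refine ⟨M + C, by linarith, fun z hz w hw => ?_⟩
  have key : Fc B ω R z - Fc B ω R w
      = (chi R z - chi R w) • Fd B ω z + chi R w • (Fd B ω z - Fd B ω w) := by
    rw [Fc, Fc, sub_smul, smul_sub]; abel
  rw [dist_eq_norm, key]
  have h1 : ‖(chi R z - chi R w) • Fd B ω z‖ ≤ dist z w * M := by
    rw [norm_smul, Real.norm_eq_abs, ← Real.dist_eq]
    exact mul_le_mul (by simpa using (chi_lipschitz R).dist_le_mul z w) (hM z hz)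
      (norm_nonneg _) dist_nonneg
  have h2 : ‖chi R w • (Fd B ω z - Fd B ω w)‖ ≤ C * dist z w := by
    rw [norm_smul, Real.norm_eq_abs, ← dist_eq_norm]
    calc |chi R w| * dist (Fd B ω z) (Fd B ω w)
        ≤ 1 * (C * dist z w) := mul_le_mul
          (abs_le.mpr ⟨by linarith [chi_nonneg R w], chi_le_one R w⟩)
          (hC z hz w hw) dist_nonneg zero_le_one
      _ = C * dist z w := one_mul _
  calc ‖(chi R z - chi R w) • Fd B ω z + chi R w • (Fd B ω z - Fd B ω w)‖
      ≤ ‖(chi R z - chi R w) • Fd B ω z‖ + ‖chi R w • (Fd B ω z - Fd B ω w)‖ := norm_add_le _ _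
    _ ≤ dist z w * M + C * dist z w := add_le_add h1 h2
    _ = (M + C) * dist z w := by ring

end CutField

section Existence

variable {B : E3 → E3} (ω : ℝ)
variable (hB : ∀ K : Set E3, IsCompact K → ∃ L : NNReal, LipschitzOnWith L B K)

include hB

lemma exists_sol (x₀ v₀ : E3) (n : ℕ) :
    ∃ α : ℝ → E3 × E3, α 0 = (x₀, v₀) ∧ ∀ t ∈ Icc (-(n+1:ℝ)) (n+1),
      HasDerivWithinAt α (Fd B ω (α t)) (Icc (-(n+1:ℝ)) (n+1)) t := by
  set T : ℝ := n + 1 with hT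
  have hT0 : 0 < T := by positivity
  set Rad : ℝ := ‖x₀‖ + ‖v₀‖ + T * ‖v₀‖ with hRad
  obtain ⟨C, hC0, hCb⟩ := Fc_bound ω hB Rad
  set R' : ℝ := C * T with hR'
  have hR'0 : 0 ≤ R' := by positivity
  obtain ⟨Lr, hLr0, hLr⟩ := Fc_dist_le ω hB Rad (‖((x₀, v₀) : E3 × E3)‖ + R')
  have hsub : closedBall ((x₀, v₀) : E3 × E3) R'
      ⊆ closedBall (0 : E3 × E3) (‖((x₀, v₀) : E3 × E3)‖ + R') := by
    intro z hz
    rw [mem_closedBall_zero_iff]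
    calc ‖z‖ ≤ ‖z - (x₀, v₀)‖ + ‖((x₀, v₀) : E3 × E3)‖ := by
          simpa using norm_add_le (z - (x₀, v₀)) ((x₀, v₀) : E3 × E3)
      _ ≤ R' + ‖((x₀, v₀) : E3 × E3)‖ := by
          have := mem_closedBall_iff_norm.mp hz; linarith
      _ = ‖((x₀, v₀) : E3 × E3)‖ + R' := by ring
  have hpl : IsPicardLindelof (fun _ z => Fc B ω Rad z) (tmin := -T) (tmax := T)
      ⟨0, ⟨by linarith, by linarith⟩⟩ (x₀, v₀) R'.toNNReal 0 C.toNNReal Lr.toNNReal :=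
    { lipschitzOnWith := fun t _ => LipschitzOnWith.of_dist_le_mul fun z hz w hw => by
        rw [Real.coe_toNNReal _ hR'0] at hz hw
        refine (hLr z (hsub hz) w (hsub hw)).trans ?_
        exact mul_le_mul_of_nonneg_right (Real.le_coe_toNNReal Lr) dist_nonneg
      continuousOn := fun x _ => continuousOn_const
      norm_le := fun t _ z _ => (hCb z).trans (Real.le_coe_toNNReal C)
      mul_max_le := by
        have : max (T - 0) (0 - -T) = T := by rw [sub_zero, zero_sub, neg_neg, max_self]
        show (C.toNNReal : ℝ) * max (T - 0) (0 - -T) ≤ (R'.toNNReal : ℝ) - ((0 : NNReal) : ℝ)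
        rw [this, Real.coe_toNNReal _ hC0, Real.coe_toNNReal _ hR'0, NNReal.coe_zero, sub_zero, hR'] }
  obtain ⟨α, hα0, hαd⟩ := hpl.exists_eq_forall_mem_Icc_hasDerivWithinAt₀
  change α 0 = (x₀, v₀) at hα0
  -- second component derivative
  have hv : ∀ t ∈ Icc (-T) T, HasDerivWithinAt (fun s => (α s).2)
      (chi Rad (α t) • (ω • crossL (α t).2 (B (α t).1))) (Icc (-T) T) t := fun t ht =>
    (ContinuousLinearMap.snd ℝ E3 E3).hasFDerivAt.comp_hasDerivWithinAt t (hαd t ht)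
  have hx : ∀ t ∈ Icc (-T) T, HasDerivWithinAt (fun s => (α s).1)
      (chi Rad (α t) • (α t).2) (Icc (-T) T) t := fun t ht =>
    (ContinuousLinearMap.fst ℝ E3 E3).hasFDerivAt.comp_hasDerivWithinAt t (hαd t ht)
  -- conservation of speed
  have hg : ∀ t ∈ Icc (-T) T, HasDerivWithinAt
      (fun s => (inner ℝ ((α s).2) ((α s).2) : ℝ)) 0 (Icc (-T) T) t := by
    intro t ht
    have h := HasDerivWithinAt.inner ℝ (hv t ht) (hv t ht)
    refine h.congr_deriv ?_
    have hz : (inner ℝ ((α t).2) (chi Rad (α t) • (ω • crossL (α t).2 (B (α t).1))) : ℝ) = 0 := by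
      rw [real_inner_smul_right, real_inner_smul_right, crossL_apply,
        inner_self_cross3]
      ring
    rw [hz, real_inner_comm ((α t).2), hz]
    ring
  have h0mem : (0 : ℝ) ∈ Icc (-T) T := ⟨by linarith, by linarith⟩
  have hgconst : ∀ t ∈ Icc (-T) T,
      (inner ℝ ((α t).2) ((α t).2) : ℝ) = (inner ℝ ((α 0).2) ((α 0).2) : ℝ) := by
    intro t ht
    have := Convex.norm_image_sub_le_of_norm_hasDerivWithin_le
      (f := fun s => (inner ℝ ((α s).2) ((α s).2) : ℝ)) (f' := fun _ => 0) (C := 0)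
      hg (fun s _ => by simp) (convex_Icc _ _) h0mem ht
    rw [zero_mul] at this
    have h1 : ‖(inner ℝ ((α t).2) ((α t).2) : ℝ) - (inner ℝ ((α 0).2) ((α 0).2) : ℝ)‖ ≤ 0 := by
      simpa using this
    exact sub_eq_zero.mp (norm_le_zero_iff.mp h1)
  have hvnorm : ∀ t ∈ Icc (-T) T, ‖(α t).2‖ = ‖v₀‖ := by
    intro t ht
    have h := hgconst t ht
    rw [real_inner_self_eq_norm_sq, real_inner_self_eq_norm_sq, hα0] at h
    have h2 : ‖(α t).2‖ = √(‖(α t).2‖ ^ 2) := (Real.sqrt_sq (norm_nonneg _)).symm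
    rw [h2, h, Real.sqrt_sq (norm_nonneg _)]
  -- position bound
  have hxbound : ∀ t ∈ Icc (-T) T, ‖(α t).1‖ ≤ ‖x₀‖ + T * ‖v₀‖ := by
    intro t ht
    have hmv : ∀ s ∈ Icc (-T) T, ‖chi Rad (α s) • (α s).2‖ ≤ ‖v₀‖ := by
      intro s hs
      rw [norm_smul, Real.norm_eq_abs, abs_of_nonneg (chi_nonneg _ _), hvnorm s hs]
      nlinarith [chi_le_one Rad (α s), chi_nonneg Rad (α s), norm_nonneg v₀]
    have := Convex.norm_image_sub_le_of_norm_hasDerivWithin_le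
      (f := fun s => (α s).1) (f' := fun s => chi Rad (α s) • (α s).2) (C := ‖v₀‖)
      hx hmv (convex_Icc _ _) h0mem ht
    have habs : ‖t - 0‖ ≤ T := by
      rw [sub_zero, Real.norm_eq_abs, abs_le]; exact ⟨ht.1, ht.2⟩
    have h1 : ‖(α t).1 - (α 0).1‖ ≤ ‖v₀‖ * T := by
      refine this.trans ?_
      exact mul_le_mul_of_nonneg_left habs (norm_nonneg _)
    have h2 : ‖(α t).1‖ ≤ ‖(α t).1 - (α 0).1‖ + ‖(α 0).1‖ := by
      simpa using norm_add_le ((α t).1 - (α 0).1) ((α 0).1)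
    simp only [hα0] at h1 h2
    nlinarith [h1, h2]
  -- the solution stays where chi = 1
  have hball : ∀ t ∈ Icc (-T) T, ‖α t‖ ≤ Rad := by
    intro t ht
    rw [Prod.norm_def]
    apply max_le
    · have := hxbound t ht; rw [hRad]; linarith [norm_nonneg v₀]
    · have := hvnorm t ht; rw [hRad]; nlinarith [norm_nonneg x₀, norm_nonneg v₀, hT0.le]
  refine ⟨α, hα0, fun t ht => ?_⟩
  have heq : Fc B ω Rad (α t) = Fd B ω (α t) := by
    rw [Fc, chi_eq_one (hball t ht), one_smul]
  have := hαd t ht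
  rwa [heq] at this

end Existence

section Unique

variable {B : E3 → E3} (ω : ℝ)
variable (hB : ∀ K : Set E3, IsCompact K → ∃ L : NNReal, LipschitzOnWith L B K)

include hB

lemma key_unique {m : ℝ} (hm : 0 < m) {α β : ℝ → E3 × E3}
    (hαc : ContinuousOn α (Icc (-m) m))
    (hαd : ∀ t ∈ Ioo (-m) m, HasDerivAt α (Fd B ω (α t)) t)
    (hβc : ContinuousOn β (Icc (-m) m))
    (hβd : ∀ t ∈ Ioo (-m) m, HasDerivAt β (Fd B ω (β t)) t)
    (h0 : α 0 = β 0) : EqOn α β (Icc (-m) m) := by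
  obtain ⟨Mα, hMα⟩ := isCompact_Icc.exists_bound_of_continuousOn hαc
  obtain ⟨Mβ, hMβ⟩ := isCompact_Icc.exists_bound_of_continuousOn hβc
  set ρ := max Mα Mβ with hρ
  obtain ⟨C, hC0, hC⟩ := Fd_dist_le ω hB ρ
  refine ODE_solution_unique_of_mem_Icc (v := fun _ z => Fd B ω z)
    (s := fun _ => closedBall (0 : E3 × E3) ρ) (K := C.toNNReal)
    (fun t _ => LipschitzOnWith.of_dist_le_mul fun z hz w hw =>
      (hC z hz w hw).trans (mul_le_mul_of_nonneg_right (Real.le_coe_toNNReal C) dist_nonneg))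
    ⟨neg_lt_zero.mpr hm, hm⟩ hαc hαd
    (fun t ht => mem_closedBall_zero_iff.mpr
      ((hMα t (Ioo_subset_Icc_self ht)).trans (le_max_left _ _)))
    hβc hβd
    (fun t ht => mem_closedBall_zero_iff.mpr
      ((hMβ t (Ioo_subset_Icc_self ht)).trans (le_max_right _ _)))
    h0

end Unique

theorem lorentz_global_wellposedness
    (B : E3 → E3)
    (hB : ∀ K : Set E3, IsCompact K → ∃ L : NNReal, LipschitzOnWith L B K)
    (x₀ v₀ : E3) (ω : ℝ) :
    ∃ x : ℝ → E3, IsLorentzSol B ω x₀ v₀ x ∧ ContDiff ℝ 2 x ∧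
      (∀ K : Set ℝ, IsCompact K → ∃ L : NNReal, LipschitzOnWith L (deriv (deriv x)) K) ∧
      (∀ y : ℝ → E3, IsLorentzSol B ω x₀ v₀ y → y = x) := by
  choose sol hsol0 hsold using exists_sol ω hB x₀ v₀
  have hsolD : ∀ n : ℕ, ∀ t ∈ Ioo (-(n+1:ℝ)) (n+1), HasDerivAt (sol n) (Fd B ω (sol n t)) t :=
    fun n t ht => (hsold n t (Ioo_subset_Icc_self ht)).hasDerivAt (Icc_mem_nhds ht.1 ht.2)
  have hsolC : ∀ n : ℕ, ContinuousOn (sol n) (Icc (-(n+1:ℝ)) (n+1)) :=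
    fun n t ht => (hsold n t ht).continuousWithinAt
  have hcons : ∀ n m' : ℕ, n ≤ m' → EqOn (sol n) (sol m') (Icc (-(n+1:ℝ)) (n+1)) := by
    intro n m' hnm
    have hcast : ((n:ℝ) + 1) ≤ (m':ℝ) + 1 := by
      have : (n:ℝ) ≤ m' := by exact_mod_cast hnm
      linarith
    have hmono : Icc (-(n+1:ℝ)) (n+1) ⊆ Icc (-(m'+1:ℝ)) (m'+1) :=
      Icc_subset_Icc (by linarith) (by linarith)
    have hmono' : Ioo (-(n+1:ℝ)) (n+1) ⊆ Ioo (-(m'+1:ℝ)) (m'+1) := fun t ht =>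
      ⟨lt_of_le_of_lt (by linarith) ht.1, lt_of_lt_of_le ht.2 (by linarith)⟩
    exact key_unique ω hB (by positivity) (hsolC n) (hsolD n)
      ((hsolC m').mono hmono) (fun t ht => hsolD m' t (hmono' ht))
      (by rw [hsol0, hsol0])
  set Z : ℝ → E3 × E3 := fun t => sol ⌈|t|⌉₊ t with hZdef
  have hmemIcc : ∀ (n : ℕ) (t : ℝ), |t| ≤ (n+1:ℝ) → t ∈ Icc (-(n+1:ℝ)) (n+1) := by
    intro n t ht
    obtain ⟨h1, h2⟩ := abs_le.mp ht
    exact ⟨h1, h2⟩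
  have hZn : ∀ (n : ℕ) (t : ℝ), |t| ≤ (n+1:ℝ) → Z t = sol n t := by
    intro n t ht
    have h1 : |t| ≤ (⌈|t|⌉₊ + 1 : ℝ) := (Nat.le_ceil _).trans (by linarith)
    calc Z t = sol (max ⌈|t|⌉₊ n) t :=
          hcons ⌈|t|⌉₊ (max ⌈|t|⌉₊ n) (le_max_left _ _) (hmemIcc _ t h1)
      _ = sol n t := (hcons n (max ⌈|t|⌉₊ n) (le_max_right _ _) (hmemIcc n t ht)).symm
  have hZ0 : Z 0 = (x₀, v₀) := by
    have h := hZn 0 0 (by norm_num)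
    rw [h, hsol0]
  have hZd : ∀ t : ℝ, HasDerivAt Z (Fd B ω (Z t)) t := by
    intro t
    have htn : |t| < (⌈|t|⌉₊ + 1 : ℝ) := lt_of_le_of_lt (Nat.le_ceil _) (by linarith)
    have hev : Z =ᶠ[𝓝 t] sol ⌈|t|⌉₊ := by
      refine eventually_of_mem ((isOpen_lt continuous_abs continuous_const).mem_nhds htn) ?_
      intro s hs
      exact hZn ⌈|t|⌉₊ s (le_of_lt hs)
    have hIoo : t ∈ Ioo (-(⌈|t|⌉₊+1:ℝ)) (⌈|t|⌉₊+1) := by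
      obtain ⟨h1, h2⟩ := abs_lt.mp htn
      exact ⟨h1, h2⟩
    have h := (hsolD ⌈|t|⌉₊ t hIoo).congr_of_eventuallyEq hev
    rwa [← hZn ⌈|t|⌉₊ t htn.le] at h
  have hZdiff : Differentiable ℝ Z := fun t => (hZd t).differentiableAt
  have hZcont : Continuous Z := hZdiff.continuous
  -- components
  set xs : ℝ → E3 := fun t => (Z t).1 with hxsdef
  set vs : ℝ → E3 := fun t => (Z t).2 with hvsdef
  have hxs : ∀ t, HasDerivAt xs (vs t) t := fun t =>
    (ContinuousLinearMap.fst ℝ E3 E3).hasFDerivAt.comp_hasDerivAt t (hZd t)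
  have hvs : ∀ t, HasDerivAt vs (ω • crossL (vs t) (B (xs t))) t := fun t =>
    (ContinuousLinearMap.snd ℝ E3 E3).hasFDerivAt.comp_hasDerivAt t (hZd t)
  have hdx : deriv xs = vs := funext fun t => (hxs t).deriv
  have hdv : deriv vs = fun t => ω • crossL (vs t) (B (xs t)) := funext fun t => (hvs t).deriv
  have hxscont : Continuous xs := continuous_fst.comp hZcont
  have hvscont : Continuous vs := continuous_snd.comp hZcont
  refine ⟨xs, ⟨?_, ?_, fun t => (hxs t).differentiableAt, ?_⟩, ?_, ?_, ?_⟩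
  · show (Z 0).1 = x₀
    rw [hZ0]
  · rw [hdx]
    show (Z 0).2 = v₀
    rw [hZ0]
  · intro t
    rw [hdx]
    simpa using hvs t
  · -- C²
    have hc1 : ContDiff ℝ 1 vs := contDiff_one_iff_deriv.mpr
      ⟨fun t => (hvs t).differentiableAt, by
        rw [hdv]
        exact (crossL.continuous₂.comp
          (hvscont.prodMk ((B_continuous hB).comp hxscont))).const_smul ω⟩
    have h21 : (2 : WithTop ℕ∞) = 1 + 1 := by norm_num
    rw [h21, contDiff_succ_iff_deriv]
    refine ⟨fun t => (hxs t).differentiableAt, ?_, ?_⟩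
    · intro h
      simp at h
    · rw [hdx]
      exact hc1
  · -- Lipschitz second derivative on compacts
    intro K hK
    obtain ⟨r, hr⟩ := hK.isBounded.subset_closedBall 0
    set m : ℝ := max r 1 with hmdef
    have hKm : K ⊆ Icc (-m) m := by
      intro t ht
      have h1 : |t| ≤ r := by
        have := hr ht
        rwa [mem_closedBall_zero_iff, Real.norm_eq_abs] at this
      have h2 : |t| ≤ m := h1.trans (le_max_left _ _)
      obtain ⟨ha, hb⟩ := abs_le.mp h2
      exact ⟨ha, hb⟩
    suffices h : ∃ L : NNReal, LipschitzOnWith L (deriv (deriv xs)) (Icc (-m) m) by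
      obtain ⟨L, hL⟩ := h
      exact ⟨L, hL.mono hKm⟩
    have hdd : deriv (deriv xs) = fun t => ω • crossL (vs t) (B (xs t)) := by rw [hdx, hdv]
    obtain ⟨MF0, hMF0⟩ := isCompact_Icc.exists_bound_of_continuousOn
      (((Fd_continuous (B := B) ω hB).comp hZcont).continuousOn (s := Icc (-m) m))
    set MF : ℝ := max MF0 0 with hMFdef
    have hMFnn : (0:ℝ) ≤ MF := le_max_right _ _
    obtain ⟨MZ0, hMZ0⟩ := isCompact_Icc.exists_bound_of_continuousOn
      (hZcont.continuousOn (s := Icc (-m) m))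
    have hZlip : ∀ a ∈ Icc (-m) m, ∀ b ∈ Icc (-m) m, dist (Z a) (Z b) ≤ MF * dist a b := by
      intro a ha b hb
      have := Convex.norm_image_sub_le_of_norm_hasDerivWithin_le (f := Z)
        (f' := fun t => Fd B ω (Z t)) (C := MF) (s := Icc (-m) m)
        (fun t _ => (hZd t).hasDerivWithinAt)
        (fun t ht => (hMF0 t ht).trans (le_max_left _ _)) (convex_Icc _ _) hb ha
      rw [dist_eq_norm, dist_eq_norm]
      exact this
    have hvslip : ∀ a ∈ Icc (-m) m, ∀ b ∈ Icc (-m) m, dist (vs a) (vs b) ≤ MF * dist a b :=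
      fun a ha b hb => (dist_snd_le' (Z a) (Z b)).trans (hZlip a ha b hb)
    have hxslip : ∀ a ∈ Icc (-m) m, ∀ b ∈ Icc (-m) m, dist (xs a) (xs b) ≤ MF * dist a b :=
      fun a ha b hb => (dist_fst_le' (Z a) (Z b)).trans (hZlip a ha b hb)
    obtain ⟨LB, hLB⟩ := hB (xs '' Icc (-m) m) (isCompact_Icc.image hxscont)
    have hBlip : ∀ a ∈ Icc (-m) m, ∀ b ∈ Icc (-m) m,
        dist (B (xs a)) (B (xs b)) ≤ ((LB : ℝ) * MF) * dist a b := by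
      intro a ha b hb
      calc dist (B (xs a)) (B (xs b)) ≤ (LB : ℝ) * dist (xs a) (xs b) :=
            hLB.dist_le_mul (xs a) (mem_image_of_mem _ ha) (xs b) (mem_image_of_mem _ hb)
        _ ≤ (LB : ℝ) * (MF * dist a b) :=
            mul_le_mul_of_nonneg_left (hxslip a ha b hb) LB.coe_nonneg
        _ = ((LB : ℝ) * MF) * dist a b := by ring
    have hvsB : ∀ a ∈ Icc (-m) m, ‖vs a‖ ≤ max MZ0 0 := fun a ha =>
      (norm_snd_le (Z a)).trans ((hMZ0 a ha).trans (le_max_left _ _))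
    obtain ⟨MBx0, hMBx0⟩ := isCompact_Icc.exists_bound_of_continuousOn
      (((B_continuous hB).comp hxscont).continuousOn (s := Icc (-m) m))
    have hBxB : ∀ a ∈ Icc (-m) m, ‖B (xs a)‖ ≤ max MBx0 0 := fun a ha =>
      (hMBx0 a ha).trans (le_max_left _ _)
    set Ccr : ℝ := 4 * max MBx0 0 * MF + 4 * max MZ0 0 * ((LB : ℝ) * MF) with hCcrdef
    have hcr : ∀ a ∈ Icc (-m) m, ∀ b ∈ Icc (-m) m,
        dist (crossL (vs a) (B (xs a))) (crossL (vs b) (B (xs b))) ≤ Ccr * dist a b :=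
      fun a ha b hb => crossL_pair_dist hMFnn (mul_nonneg LB.coe_nonneg hMFnn)
        hvslip hBlip hvsB hBxB ha hb
    refine ⟨(|ω| * Ccr).toNNReal, LipschitzOnWith.of_dist_le_mul fun a ha b hb => ?_⟩
    rw [hdd]
    calc dist (ω • crossL (vs a) (B (xs a))) (ω • crossL (vs b) (B (xs b)))
        = |ω| * dist (crossL (vs a) (B (xs a))) (crossL (vs b) (B (xs b))) := by
          rw [dist_smul₀, Real.norm_eq_abs]
      _ ≤ |ω| * (Ccr * dist a b) := mul_le_mul_of_nonneg_left (hcr a ha b hb) (abs_nonneg ω)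
      _ = (|ω| * Ccr) * dist a b := by ring
      _ ≤ ((|ω| * Ccr).toNNReal : ℝ) * dist a b :=
          mul_le_mul_of_nonneg_right (Real.le_coe_toNNReal _) dist_nonneg
  · -- uniqueness
    intro y hy
    obtain ⟨hy0, hyd0, hydiff, hyode⟩ := hy
    have hwd : ∀ t, HasDerivAt y (deriv y t) t := fun t => (hydiff t).hasDerivAt
    set Y : ℝ → E3 × E3 := fun t => (y t, deriv y t) with hYdef
    have hYd : ∀ t, HasDerivAt Y (Fd B ω (Y t)) t := by
      intro t
      exact (hwd t).prodMk (by simpa using hyode t)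
    have hYdiff : Differentiable ℝ Y := fun t => (hYd t).differentiableAt
    have hY0 : Y 0 = (x₀, v₀) := by
      rw [hYdef]
      simp only [hy0, hyd0]
    funext t
    have hm : (0:ℝ) < |t| + 1 := by positivity
    have heq := key_unique ω hB hm
      (hYdiff.continuous.continuousOn) (fun s _ => hYd s)
      (hZcont.continuousOn) (fun s _ => hZd s)
      (by rw [hY0, hZ0])
      (show t ∈ Icc (-(|t|+1)) (|t|+1) by
        obtain ⟨h1, h2⟩ := abs_le.mp (le_of_lt (lt_add_one |t|))
        constructor <;> [linarith [neg_abs_le t]; linarith [le_abs_self t]])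
    have : (Y t).1 = (Z t).1 := by rw [heq]
    simpa using this
end
end

section
/- Let B ∈ C² with div(B) = 0 and B(y) ≠ 0 for all y ∈ ℝ³, fix x₀, v₀ ∈ ℝ³, and let (x, h) be the unique global solution of the limit system. Define the magnetic moment μ(t) := (|v₀|² − h(t)²)/(2|B(x(t))|). Then μ(t) = μ(0) = μ₀ for all t ∈ ℝ. -/
noncomputable section

open Real Filter Topology MeasureTheory intervalIntegral Bornology

lemma clm_eval_sum (L : E3 →L[ℝ] ℝ) (v : E3) :
    L v = ∑ i : Fin 3, v i * L (EuclideanSpace.single i 1) := by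
  have hv : v = ∑ i : Fin 3, v i • EuclideanSpace.single i (1:ℝ) := by
    ext j
    rw [show ((∑ i : Fin 3, v i • EuclideanSpace.single i (1:ℝ)) j)
        = ∑ i : Fin 3, (v i • EuclideanSpace.single i (1:ℝ)) j from by rw [WithLp.ofLp_sum]; exact Finset.sum_apply j _ _]
    simp [EuclideanSpace.single_apply]
  conv_lhs => rw [hv]
  simp [map_sum]

theorem magnetic_moment_preservation
    (B : E3 → E3) (hB : IsCkBounded 2 B) (hdiv : ∀ y : E3, divg B y = 0)
    (hB0 : ∀ y : E3, B y ≠ 0) (x₀ v₀ : E3)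
    (x : ℝ → E3) (h : ℝ → ℝ) (hlim : IsLimitSol B x₀ v₀ x h) :
    ∀ t : ℝ, (‖v₀‖ ^ 2 - h t ^ 2) / (2 * ‖B (x t)‖)
      = (‖v₀‖ ^ 2 - (inner ℝ v₀ (bdir B x₀) : ℝ) ^ 2) / (2 * ‖B x₀‖) := by
  obtain ⟨hx0, hh0, hxd, hhd⟩ := hlim
  have hBcd : ContDiff ℝ 2 B := hB.1
  set f : E3 → ℝ := fun y => ‖B y‖ with hfdef
  have hfpos : ∀ y, 0 < f y := fun y => norm_pos_iff.mpr (hB0 y)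
  have hfd : ∀ y, DifferentiableAt ℝ f y := fun y =>
    (hBcd.contDiffAt.norm ℝ (hB0 y)).differentiableAt (by norm_num)
  have hBd : ∀ y, HasFDerivAt B (fderiv ℝ B y) y :=
    fun y => (hBcd.differentiable (by norm_num) y).hasFDerivAt
  -- divergence identity: div b = -(f^2)⁻¹ * ⟨∇f, B⟩
  have key : ∀ y, divg (bdir B) y = -((f y ^ 2)⁻¹ * fderiv ℝ f y (B y)) := by
    intro y
    have hg : HasFDerivAt (fun z => (f z)⁻¹) (-(f y ^ 2)⁻¹ • fderiv ℝ f y) y :=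
      (hasDerivAt_inv (hfpos y).ne').comp_hasFDerivAt y (hfd y).hasFDerivAt
    have hb : HasFDerivAt (fun z => (f z)⁻¹ • B z)
        ((f y)⁻¹ • fderiv ℝ B y + (-(f y ^ 2)⁻¹ • fderiv ℝ f y).smulRight (B y)) y :=
      hg.smul (hBd y)
    have hb' : fderiv ℝ (bdir B) y
        = (f y)⁻¹ • fderiv ℝ B y + (-(f y ^ 2)⁻¹ • fderiv ℝ f y).smulRight (B y) := by
      have hbe : bdir B = fun z => (f z)⁻¹ • B z := rfl
      rw [hbe]; exact hb.fderiv
    have hdivy : ∑ i : Fin 3, fderiv ℝ B y (EuclideanSpace.single i (1:ℝ)) i = 0 := hdiv y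
    simp only [divg, hb', ContinuousLinearMap.add_apply, ContinuousLinearMap.smul_apply,
      ContinuousLinearMap.smulRight_apply, PiLp.add_apply, PiLp.smul_apply, smul_eq_mul]
    rw [Finset.sum_add_distrib, ← Finset.mul_sum, hdivy,
      clm_eval_sum (fderiv ℝ f y) (B y), Finset.mul_sum]
    simp only [mul_zero, zero_add, neg_mul]
    rw [← Finset.sum_neg_distrib]
    exact Finset.sum_congr rfl fun i _ => by ring
  -- the magnetic moment has zero derivative
  set μ : ℝ → ℝ := fun t => (‖v₀‖ ^ 2 - h t ^ 2) / (2 * f (x t)) with hμdef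
  have hμ' : ∀ t, HasDerivAt μ 0 t := by
    intro t
    set S : ℝ := fderiv ℝ f (x t) (B (x t)) with hS
    have hfx : HasDerivAt (fun s => f (x s)) (fderiv ℝ f (x t) (h t • bdir B (x t))) t :=
      (hfd (x t)).hasFDerivAt.comp_hasDerivAt t (hxd t)
    have e1 : fderiv ℝ f (x t) (h t • bdir B (x t)) = h t * ((f (x t))⁻¹ * S) := by
      rw [ContinuousLinearMap.map_smul]
      have : bdir B (x t) = (f (x t))⁻¹ • B (x t) := rfl
      rw [this, ContinuousLinearMap.map_smul]
      simp [hS, smul_eq_mul]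
    rw [e1] at hfx
    have hN : HasDerivAt (fun s => ‖v₀‖ ^ 2 - h s ^ 2)
        (-(2 * h t * ((‖v₀‖ ^ 2 - h t ^ 2) / 2 * divg (bdir B) (x t)))) t := by
      simpa [mul_comm, mul_assoc, mul_left_comm] using
        ((hasDerivAt_const t (‖v₀‖ ^ 2)).fun_sub ((hhd t).fun_pow 2))
    have hden : HasDerivAt (fun s => 2 * f (x s)) (2 * (h t * ((f (x t))⁻¹ * S))) t :=
      hfx.const_mul 2
    have hne : 2 * f (x t) ≠ 0 := mul_ne_zero two_ne_zero (hfpos (x t)).ne'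
    have hdq := hN.div hden hne
    have hzero : (-(2 * h t * ((‖v₀‖ ^ 2 - h t ^ 2) / 2 * divg (bdir B) (x t))) * (2 * f (x t))
        - (‖v₀‖ ^ 2 - h t ^ 2) * (2 * (h t * ((f (x t))⁻¹ * S)))) / (2 * f (x t)) ^ 2 = 0 := by
      rw [key (x t)]
      have hf0 : f (x t) ≠ 0 := (hfpos (x t)).ne'
      field_simp
      ring
    rw [hzero] at hdq
    exact hdq
  have hconst : ∀ t : ℝ, μ t = μ 0 :=
    fun t => is_const_of_deriv_eq_zero (fun s => (hμ' s).differentiableAt)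
      (fun s => (hμ' s).deriv) t 0
  intro t
  have := hconst t
  simp only [hμdef, hx0, hh0] at this
  exact this
end
end

section
/- Let B ∈ C² with div(B) = 0 and B(y) ≠ 0 for all y ∈ ℝ³, fix x₀, v₀ ∈ ℝ³, and let (x, h) be the unique global solution of the limit system. Then x satisfies the second order ODE x''(t) = μ₀ |B(x(t))| div(b)(x(t)) b(x(t)) + (|v₀|² − 2μ₀|B(x(t))|) (Db)(x(t))·b(x(t)) for all t ∈ ℝ, together with x(0) = x₀ and x'(0) = h₀ b(x₀), where Db denotes the Jacobian matrix of b. -/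
noncomputable section

open Real Filter Topology MeasureTheory intervalIntegral Bornology

lemma euclid_sum_single (v : E3) :
    ∑ i : Fin 3, v i • EuclideanSpace.single i (1:ℝ) = v := by
  ext j
  simp [Fin.sum_univ_three, EuclideanSpace.single_apply, PiLp.smul_apply]
  fin_cases j <;> simp

theorem limit_trajectory_second_order_ode
    (B : E3 → E3) (hB : IsCkBounded 2 B) (hdiv : ∀ y : E3, divg B y = 0)
    (hB0 : ∀ y : E3, B y ≠ 0) (x₀ v₀ : E3)
    (x : ℝ → E3) (h : ℝ → ℝ) (hlim : IsLimitSol B x₀ v₀ x h) :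
    x 0 = x₀ ∧ deriv x 0 = (inner ℝ v₀ (bdir B x₀) : ℝ) • bdir B x₀ ∧
    ∀ t : ℝ, HasDerivAt (deriv x)
      ((((‖v₀‖ ^ 2 - (inner ℝ v₀ (bdir B x₀) : ℝ) ^ 2) / (2 * ‖B x₀‖)) * ‖B (x t)‖
          * divg (bdir B) (x t)) • bdir B (x t)
        + (‖v₀‖ ^ 2
            - 2 * ((‖v₀‖ ^ 2 - (inner ℝ v₀ (bdir B x₀) : ℝ) ^ 2) / (2 * ‖B x₀‖)) * ‖B (x t)‖)
            • fderiv ℝ (bdir B) (x t) (bdir B (x t))) t := by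
  obtain ⟨hx0, hh0, hx', hh'⟩ := hlim
  have hBdiff : Differentiable ℝ B := hB.1.differentiable (by norm_num)
  have hN0 : ∀ y : E3, ‖B y‖ ≠ 0 := fun y => norm_ne_zero_iff.mpr (hB0 y)
  have hNd : ∀ y : E3, DifferentiableAt ℝ (fun z => ‖B z‖) y := fun y =>
    (hBdiff y).norm ℝ (hB0 y)
  -- Fréchet derivative of bdir B
  have hbd : ∀ y : E3, HasFDerivAt (bdir B)
      ((‖B y‖)⁻¹ • fderiv ℝ B y +
        (((-(ContinuousLinearMap.mulLeftRight ℝ ℝ (‖B y‖)⁻¹ (‖B y‖)⁻¹)).comp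
            (fderiv ℝ (fun z => ‖B z‖) y)).smulRight (B y))) y := by
    intro y
    have h1 : HasFDerivAt (fun z : E3 => (‖B z‖)⁻¹)
        ((-(ContinuousLinearMap.mulLeftRight ℝ ℝ (‖B y‖)⁻¹ (‖B y‖)⁻¹)).comp
          (fderiv ℝ (fun z => ‖B z‖) y)) y :=
      (hasFDerivAt_inv' (hN0 y)).comp y (hNd y).hasFDerivAt
    exact h1.smul (hBdiff y).hasFDerivAt
  have hbeval : ∀ y v, fderiv ℝ (bdir B) y v
      = (‖B y‖)⁻¹ • fderiv ℝ B y v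
        - ((‖B y‖)⁻¹ * fderiv ℝ (fun z => ‖B z‖) y v * (‖B y‖)⁻¹) • B y := by
    intro y v
    rw [(hbd y).fderiv]
    simp [ContinuousLinearMap.smulRight_apply, ContinuousLinearMap.mulLeftRight_apply,
      sub_eq_add_neg, neg_smul]
  -- divergence identity for the unit field
  have hdivb : ∀ y : E3,
      fderiv ℝ (fun z => ‖B z‖) y (bdir B y) = -(‖B y‖ * divg (bdir B) y) := by
    intro y
    have hn : ‖B y‖ ≠ 0 := hN0 y
    have hDNB : fderiv ℝ (fun z => ‖B z‖) y (B y)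
        = ∑ i : Fin 3, B y i * fderiv ℝ (fun z => ‖B z‖) y (EuclideanSpace.single i 1) := by
      conv_lhs => rw [← euclid_sum_single (B y)]
      rw [map_sum]
      simp [smul_eq_mul]
    have hdg : divg (bdir B) y
        = (‖B y‖)⁻¹ * divg B y
          - (‖B y‖)⁻¹ * (‖B y‖)⁻¹ * fderiv ℝ (fun z => ‖B z‖) y (B y) := by
      unfold divg
      rw [hDNB, Finset.mul_sum, Finset.mul_sum, ← Finset.sum_sub_distrib]
      refine Finset.sum_congr rfl fun i _ => ?_
      rw [hbeval]
      simp [PiLp.sub_apply, PiLp.smul_apply, smul_eq_mul]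
      ring
    have hBnb : B y = ‖B y‖ • bdir B y := by
      unfold bdir; rw [smul_smul, mul_inv_cancel₀ hn, one_smul]
    have hDNb : fderiv ℝ (fun z => ‖B z‖) y (B y)
        = ‖B y‖ * fderiv ℝ (fun z => ‖B z‖) y (bdir B y) := by
      conv_lhs => rw [hBnb]
      simp
    rw [hdiv y, hDNb] at hdg
    rw [hdg]
    field_simp
    ring
  -- derivative of the field strength along the trajectory
  have hNt : ∀ t : ℝ, HasDerivAt (fun s => ‖B (x s)‖)
      (-(h t * (‖B (x t)‖ * divg (bdir B) (x t)))) t := by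
    intro t
    have h1 := (hNd (x t)).hasFDerivAt.comp_hasDerivAt t (hx' t)
    refine h1.congr_deriv ?_
    rw [_root_.map_smul, hdivb]
    simp [smul_eq_mul]
  set K := ‖v₀‖ ^ 2 with hK
  set μ := (K - (inner ℝ v₀ (bdir B x₀) : ℝ) ^ 2) / (2 * ‖B x₀‖) with hμ
  -- conservation of the adiabatic invariant
  set φ : ℝ → ℝ := fun t => (K - h t ^ 2) / 2 * (‖B (x t)‖)⁻¹ with hφ
  have hφ' : ∀ t, HasDerivAt φ 0 t := by
    intro t
    have h1 : HasDerivAt (fun s => (K - h s ^ 2) / 2)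
        ((0 - 2 * h t ^ 1 * ((K - h t ^ 2) / 2 * divg (bdir B) (x t))) / 2) t :=
      ((hasDerivAt_const t K).sub ((hh' t).pow 2)).div_const 2
    have h2 : HasDerivAt (fun s => (‖B (x s)‖)⁻¹)
        (-(-(h t * (‖B (x t)‖ * divg (bdir B) (x t)))) / ‖B (x t)‖ ^ 2) t :=
      (hNt t).inv (hN0 (x t))
    have h3 := h1.mul h2
    refine h3.congr_deriv ?_
    have hn := hN0 (x t)
    linear_combination ((K - h t ^ 2) / 2 * h t * divg (bdir B) (x t) * (‖B (x t)‖)⁻¹) * mul_inv_cancel₀ hn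
  have hconst : ∀ t, φ t = φ 0 := fun t =>
    is_const_of_deriv_eq_zero (fun s => (hφ' s).differentiableAt)
      (fun s => (hφ' s).deriv) t 0
  have hmu : ∀ t, (K - h t ^ 2) / 2 = μ * ‖B (x t)‖ := by
    intro t
    have h2 := hconst t
    simp only [hφ] at h2
    rw [hx0, hh0] at h2
    have hx0n : ‖B x₀‖ ≠ 0 := hN0 x₀
    have hxtn : ‖B (x t)‖ ≠ 0 := hN0 (x t)
    rw [hμ]
    field_simp at h2 ⊢
    linarith [h2]
  refine ⟨hx0, ?_, ?_⟩
  · rw [(hx' 0).deriv, hh0, hx0]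
  · intro t
    have hderiv_x : deriv x = fun s => h s • bdir B (x s) := funext fun s => (hx' s).deriv
    rw [hderiv_x]
    have hc := (hh' t).smul ((hbd (x t)).comp_hasDerivAt t (hx' t))
    refine hc.congr_deriv ?_
    simp only [Function.comp_apply]
    rw [_root_.map_smul, smul_smul, ← (hbd (x t)).fderiv]
    rw [show K - 2 * μ * ‖B (x t)‖ = h t * h t from by linear_combination (2:ℝ) * hmu t]
    rw [show μ * ‖B (x t)‖ * divg (bdir B) (x t)
        = (K - h t ^ 2) / 2 * divg (bdir B) (x t) from by rw [← hmu t]]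
    abel
end
end

section
/- Let b : ℝ³ → ℝ³ be a continuously differentiable unit vector field, i.e. |b(x)| = 1 for all x ∈ ℝ³, and let v ∈ ℝ³ be a fixed vector. Then for every x ∈ ℝ³: vᵀ·Db(x)·v + (v × b(x))ᵀ·Db(x)·(v × b(x)) = div(b)(x)(|v|² − (v·b(x))²) − (v·b(x)) (v × b(x))·curl(b)(x), where Db denotes the Jacobian matrix of b. -/
noncomputable section

open Real Filter Topology MeasureTheory intervalIntegral Bornology

lemma euclid_decomp (u : E3) : u = ∑ j : Fin 3, u j • EuclideanSpace.single j (1:ℝ) := by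
  ext i
  rw [Fin.sum_univ_three]
  fin_cases i <;> simp [EuclideanSpace.single_apply]

theorem unit_field_quadratic_identity
    (b : E3 → E3) (hb : ContDiff ℝ 1 b) (hunit : ∀ x : E3, ‖b x‖ = 1) (v : E3) :
    ∀ x : E3,
      (inner ℝ v (fderiv ℝ b x v) : ℝ)
        + (inner ℝ (cross3 v (b x)) (fderiv ℝ b x (cross3 v (b x))) : ℝ)
      = divg b x * (‖v‖ ^ 2 - (inner ℝ v (b x) : ℝ) ^ 2)
        - (inner ℝ v (b x) : ℝ) * (inner ℝ (cross3 v (b x)) (curl3 b x) : ℝ) := by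
  intro x
  have hdiff : Differentiable ℝ b := hb.differentiable one_ne_zero
  -- unit-field constraint : ⟪Du, b x⟫ = 0
  have hc : ∀ u : E3, (inner ℝ (fderiv ℝ b x u) (b x) : ℝ) = 0 := by
    intro u
    have h2 := ((hdiff x).hasFDerivAt.inner ℝ (hdiff x).hasFDerivAt)
    have h1 : (fun y => (inner ℝ (b y) (b y) : ℝ)) = fun _ => (1:ℝ) := by
      funext y
      rw [real_inner_self_eq_norm_sq, hunit]; norm_num
    rw [h1] at h2
    have h0 := h2.unique (hasFDerivAt_const 1 x)
    have h3 := congrFun (congrArg DFunLike.coe h0) u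
    simp [fderivInnerCLM_apply, PiLp.inner_apply, mul_comm] at h3 ⊢
    simpa [mul_comm] using h3
  -- linear expansion of the derivative
  have hA : ∀ (u : E3) (i : Fin 3), fderiv ℝ b x u i =
      u 0 * fderiv ℝ b x (EuclideanSpace.single 0 (1:ℝ)) i
      + u 1 * fderiv ℝ b x (EuclideanSpace.single 1 (1:ℝ)) i
      + u 2 * fderiv ℝ b x (EuclideanSpace.single 2 (1:ℝ)) i := by
    intro u i
    conv_lhs => rw [euclid_decomp u]
    rw [map_sum, Fin.sum_univ_three]
    simp [PiLp.add_apply, PiLp.smul_apply, smul_eq_mul]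
  set a00 := fderiv ℝ b x (EuclideanSpace.single 0 (1:ℝ)) 0 with ha00
  set a10 := fderiv ℝ b x (EuclideanSpace.single 0 (1:ℝ)) 1 with ha10
  set a20 := fderiv ℝ b x (EuclideanSpace.single 0 (1:ℝ)) 2 with ha20
  set a01 := fderiv ℝ b x (EuclideanSpace.single 1 (1:ℝ)) 0 with ha01
  set a11 := fderiv ℝ b x (EuclideanSpace.single 1 (1:ℝ)) 1 with ha11
  set a21 := fderiv ℝ b x (EuclideanSpace.single 1 (1:ℝ)) 2 with ha21
  set a02 := fderiv ℝ b x (EuclideanSpace.single 2 (1:ℝ)) 0 with ha02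
  set a12 := fderiv ℝ b x (EuclideanSpace.single 2 (1:ℝ)) 1 with ha12
  set a22 := fderiv ℝ b x (EuclideanSpace.single 2 (1:ℝ)) 2 with ha22
  set b0 := b x 0 with hb0
  set b1 := b x 1 with hb1
  set b2 := b x 2 with hb2
  set v0 := v 0 with hv0
  set v1 := v 1 with hv1
  set v2 := v 2 with hv2
  -- constraints in coordinates
  have hc0 : a00 * b0 + a10 * b1 + a20 * b2 = 0 := by
    have := hc (EuclideanSpace.single 0 (1:ℝ))
    rw [PiLp.inner_apply, Fin.sum_univ_three] at this
    simp at this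
    simp only [ha00, ha10, ha20, ha01, ha11, ha21, ha02, ha12, ha22, hb0, hb1, hb2]
    linear_combination this
  have hc1 : a01 * b0 + a11 * b1 + a21 * b2 = 0 := by
    have := hc (EuclideanSpace.single 1 (1:ℝ))
    rw [PiLp.inner_apply, Fin.sum_univ_three] at this
    simp at this
    simp only [ha00, ha10, ha20, ha01, ha11, ha21, ha02, ha12, ha22, hb0, hb1, hb2]
    linear_combination this
  have hc2 : a02 * b0 + a12 * b1 + a22 * b2 = 0 := by
    have := hc (EuclideanSpace.single 2 (1:ℝ))
    rw [PiLp.inner_apply, Fin.sum_univ_three] at this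
    simp at this
    simp only [ha00, ha10, ha20, ha01, ha11, ha21, ha02, ha12, ha22, hb0, hb1, hb2]
    linear_combination this
  have hq : b0 ^ 2 + b1 ^ 2 + b2 ^ 2 = 1 := by
    have : (inner ℝ (b x) (b x) : ℝ) = 1 := by
      rw [real_inner_self_eq_norm_sq, hunit]; norm_num
    rw [PiLp.inner_apply, Fin.sum_univ_three] at this
    simpa [sq] using this
  have hnv : ‖v‖ ^ 2 = v0 ^ 2 + v1 ^ 2 + v2 ^ 2 := by
    have : (inner ℝ v v : ℝ) = ‖v‖ ^ 2 := real_inner_self_eq_norm_sq v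
    rw [PiLp.inner_apply, Fin.sum_univ_three] at this
    rw [← this]; ring_nf; simp [sq]; rfl
  -- cross product components
  have hw0 : cross3 v (b x) 0 = v1 * b2 - v2 * b1 := by simp [cross3]; rfl
  have hw1 : cross3 v (b x) 1 = v2 * b0 - v0 * b2 := by simp [cross3]; rfl
  have hw2 : cross3 v (b x) 2 = v0 * b1 - v1 * b0 := by simp [cross3]; rfl
  rw [divg, Fin.sum_univ_three]
  rw [show (inner ℝ v (fderiv ℝ b x v) : ℝ) = _ from PiLp.inner_apply ..,
      show (inner ℝ (cross3 v (b x)) (fderiv ℝ b x (cross3 v (b x))) : ℝ) = _ from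
        PiLp.inner_apply ..,
      show (inner ℝ v (b x) : ℝ) = _ from PiLp.inner_apply ..,
      show (inner ℝ (cross3 v (b x)) (curl3 b x) : ℝ) = _ from PiLp.inner_apply ..]
  simp only [Fin.sum_univ_three, RCLike.inner_apply, conj_trivial]
  rw [hA v 0, hA v 1, hA v 2, hA (cross3 v (b x)) 0, hA (cross3 v (b x)) 1,
      hA (cross3 v (b x)) 2, hw0, hw1, hw2, hnv]
  simp only [curl3, WithLp.equiv_symm_apply, PiLp.toLp_apply, Matrix.cons_val_zero, Matrix.cons_val_one,
    Matrix.head_cons, Matrix.cons_val_two, Matrix.tail_cons]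
  rw [← ha00, ← ha10, ← ha20, ← ha01, ← ha11, ← ha21, ← ha02, ← ha12, ← ha22,
     ← hb0, ← hb1, ← hb2, ← hv0, ← hv1, ← hv2]
  linear_combination
    hc0 * (2 * (v0*b0+v1*b1+v2*b2) * v0 - (v0^2+v1^2+v2^2) * b0)
    + hc1 * (2 * (v0*b0+v1*b1+v2*b2) * v1 - (v0^2+v1^2+v2^2) * b1)
    + hc2 * (2 * (v0*b0+v1*b1+v2*b2) * v2 - (v0^2+v1^2+v2^2) * b2)
    + hq * ((a00+a11+a22) * (v0^2+v1^2+v2^2)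
        - (a00*v0*v0 + a01*v0*v1 + a02*v0*v2 + a10*v1*v0 + a11*v1*v1
           + a12*v1*v2 + a20*v2*v0 + a21*v2*v1 + a22*v2*v2))
end
end

section
/- Let b : ℝ³ → ℝ³ be a continuously differentiable unit vector field, i.e. |b(x)| = 1 for all x ∈ ℝ³, and let v ∈ ℝ³ be a fixed vector. Then for every x ∈ ℝ³: (Db(x)·(v × b(x))) × (v × b(x)) = [(b(x)·v)(v·curl(b)(x)) − |v|²(b(x)·curl(b)(x)) − (Db(x)·v)·(v × b(x))] b(x), where Db denotes the Jacobian matrix of b. -/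
noncomputable section

open Real Filter Topology MeasureTheory intervalIntegral Bornology

set_option maxHeartbeats 2000000 in
theorem unit_field_cross_identity
    (b : E3 → E3) (hb : ContDiff ℝ 1 b) (hunit : ∀ x : E3, ‖b x‖ = 1) (v : E3) :
    ∀ x : E3,
      cross3 (fderiv ℝ b x (cross3 v (b x))) (cross3 v (b x))
      = ((inner ℝ (b x) v : ℝ) * (inner ℝ v (curl3 b x) : ℝ)
          - ‖v‖ ^ 2 * (inner ℝ (b x) (curl3 b x) : ℝ)
          - (inner ℝ (fderiv ℝ b x v) (cross3 v (b x)) : ℝ)) • b x := by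
  intro x
  have hd : DifferentiableAt ℝ b x := (hb.differentiable one_ne_zero).differentiableAt
  have hO : ∀ w : E3, (inner ℝ (fderiv ℝ b x w) (b x) : ℝ) = 0 := by
    intro w
    have h1 := (hd.hasFDerivAt.inner ℝ hd.hasFDerivAt)
    have h2 : (fun y => (inner ℝ (b y) (b y) : ℝ)) = fun _ => (1:ℝ) := by
      funext y
      rw [real_inner_self_eq_norm_sq, hunit y]; norm_num
    rw [h2] at h1
    have h3 := (hasFDerivAt_const (1:ℝ) x).unique h1
    have h4 := DFunLike.congr_fun h3 w
    simp only [ContinuousLinearMap.zero_apply, ContinuousLinearMap.comp_apply,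
      ContinuousLinearMap.prod_apply, fderivInnerCLM_apply] at h4
    linarith [h4, real_inner_comm (b x) ((fderiv ℝ b x) w)]
  have hdecomp : ∀ w : E3, w = w 0 • EuclideanSpace.single 0 (1:ℝ)
      + w 1 • EuclideanSpace.single 1 (1:ℝ) + w 2 • EuclideanSpace.single 2 (1:ℝ) := by
    intro w
    refine PiLp.ext fun i => ?_
    fin_cases i <;>
      simp [EuclideanSpace.single_apply, PiLp.add_apply, PiLp.smul_apply]
  have hmap : ∀ w : E3, fderiv ℝ b x w
      = w 0 • fderiv ℝ b x (EuclideanSpace.single 0 (1:ℝ))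
      + w 1 • fderiv ℝ b x (EuclideanSpace.single 1 (1:ℝ))
      + w 2 • fderiv ℝ b x (EuclideanSpace.single 2 (1:ℝ)) := by
    intro w
    conv_lhs => rw [hdecomp w]
    simp [map_add, _root_.map_smul]
  have hC0 := hO (EuclideanSpace.single 0 (1:ℝ))
  have hC1 := hO (EuclideanSpace.single 1 (1:ℝ))
  have hC2 := hO (EuclideanSpace.single 2 (1:ℝ))
  simp only [PiLp.inner_apply, RCLike.inner_apply, conj_trivial, Fin.sum_univ_three]
    at hC0 hC1 hC2
  rw [hmap (cross3 v (b x)), hmap v, ← real_inner_self_eq_norm_sq]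
  refine PiLp.ext fun i => ?_
  fin_cases i
  · simp only [cross3, curl3, WithLp.equiv_symm_apply, PiLp.toLp_apply, PiLp.inner_apply,
      RCLike.inner_apply, conj_trivial, Fin.sum_univ_three, PiLp.add_apply,
      PiLp.smul_apply, smul_eq_mul, Matrix.cons_val_zero, Matrix.cons_val_one,
      Matrix.head_cons, Matrix.cons_val_two, Matrix.tail_cons, Fin.isValue, Fin.zero_eta, Fin.mk_one, Fin.reduceFinMk]
    linear_combination (b x 2*v 0*v 1 - b x 1*v 0*v 2) * hC0 + (-(b x 2)*v 0^2 + b x 0*v 0*v 2) * hC1 + (b x 1*v 0^2 - b x 0*v 0*v 1) * hC2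
  · simp only [cross3, curl3, WithLp.equiv_symm_apply, PiLp.toLp_apply, PiLp.inner_apply,
      RCLike.inner_apply, conj_trivial, Fin.sum_univ_three, PiLp.add_apply,
      PiLp.smul_apply, smul_eq_mul, Matrix.cons_val_zero, Matrix.cons_val_one,
      Matrix.head_cons, Matrix.cons_val_two, Matrix.tail_cons, Fin.isValue, Fin.zero_eta, Fin.mk_one, Fin.reduceFinMk]
    linear_combination (b x 2*v 1^2 - b x 1*v 1*v 2) * hC0 + (-(b x 2)*v 0*v 1 + b x 0*v 1*v 2) * hC1 + (b x 1*v 0*v 1 - b x 0*v 1^2) * hC2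
  · simp only [cross3, curl3, WithLp.equiv_symm_apply, PiLp.toLp_apply, PiLp.inner_apply,
      RCLike.inner_apply, conj_trivial, Fin.sum_univ_three, PiLp.add_apply,
      PiLp.smul_apply, smul_eq_mul, Matrix.cons_val_zero, Matrix.cons_val_one,
      Matrix.head_cons, Matrix.cons_val_two, Matrix.tail_cons, Fin.isValue, Fin.zero_eta, Fin.mk_one, Fin.reduceFinMk]
    linear_combination (b x 2*v 1*v 2 - b x 1*v 2^2) * hC0 + (-(b x 2)*v 0*v 2 + b x 0*v 2^2) * hC1 + (b x 1*v 0*v 2 - b x 0*v 1*v 2) * hC2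
end
end

section
/- Let B ∈ C² with div(B) = 0 and B(y) ≠ 0 for all y ∈ ℝ³, fix x₀, v₀ ∈ ℝ³, and let (x, h) be the unique global solution of the limit system. Suppose there exist T > 0 and a sequence ω_n → ∞ such that x_{ω_n} converges to x in W^{1,1}((0,T); ℝ³), i.e. ∫₀ᵀ |x_{ω_n}(t) − x(t)| dt + ∫₀ᵀ |x'_{ω_n}(t) − x'(t)| dt → 0. Then (v₀ · b(x₀))² = |v₀|², i.e. v₀ is parallel to b(x₀). Consequently, whenever v₀ is not parallel to b(x₀), the convergence of x_ω to x cannot be improved to W^{1,1}_loc (nor to C^{0,1}_loc) convergence. -/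
noncomputable section

open Real Filter Topology MeasureTheory intervalIntegral Bornology

lemma inner_cross3_self (u v : E3) : (inner ℝ (cross3 u v) u : ℝ) = 0 := by
  simp [cross3, PiLp.inner_apply, Fin.sum_univ_three, WithLp.equiv_symm_apply, PiLp.toLp_apply]
  ring

lemma lorentz_speed_const (B : E3 → E3) (ω : ℝ) (x₀ v₀ : E3) (y : ℝ → E3)
    (hy : IsLorentzSol B ω x₀ v₀ y) (t : ℝ) : ‖deriv y t‖ = ‖v₀‖ := by
  obtain ⟨-, hv0, -, hv⟩ := hy
  set v := deriv y with hvdef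
  have hφ : ∀ s : ℝ, HasDerivAt (fun s => (inner ℝ (v s) (v s) : ℝ)) 0 s := by
    intro s
    have h1 := (hv s).inner ℝ (hv s)
    have h2 : (inner ℝ (v s) (ω • cross3 (v s) (B (y s))) : ℝ)
        + (inner ℝ (ω • cross3 (v s) (B (y s))) (v s) : ℝ) = 0 := by
      have hc : (inner ℝ (cross3 (v s) (B (y s))) (v s) : ℝ) = 0 := inner_cross3_self _ _
      have hc2 : (inner ℝ (v s) (cross3 (v s) (B (y s))) : ℝ) = 0 := by
        rw [real_inner_comm]; exact hc
      rw [real_inner_comm (v s) (ω • cross3 (v s) (B (y s))), real_inner_smul_right, hc2]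
      ring
    rwa [h2] at h1
  have hconst := is_const_of_deriv_eq_zero (fun s => (hφ s).differentiableAt)
    (fun s => (hφ s).deriv) t 0
  have hsq : ‖v t‖ ^ 2 = ‖v 0‖ ^ 2 := by
    rw [← real_inner_self_eq_norm_sq, ← real_inner_self_eq_norm_sq]; exact hconst
  rw [← hv0]
  nlinarith [norm_nonneg (v t), norm_nonneg (v 0)]

theorem no_W11_convergence_unless_parallel
    (B : E3 → E3) (hB : IsCkBounded 2 B) (hdiv : ∀ y : E3, divg B y = 0)
    (hB0 : ∀ y : E3, B y ≠ 0) (x₀ v₀ : E3)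
    (x : ℝ → E3) (h : ℝ → ℝ) (hlim : IsLimitSol B x₀ v₀ x h)
    (xω : ℝ → ℝ → E3) (hxω : ∀ ω : ℝ, 0 < ω → IsLorentzSol B ω x₀ v₀ (xω ω))
    (T : ℝ) (hT : 0 < T) (ωn : ℕ → ℝ) (hωpos : ∀ n : ℕ, 0 < ωn n)
    (hωtop : Tendsto ωn atTop atTop)
    (hconv : Tendsto (fun n : ℕ =>
        (∫ t in (0:ℝ)..T, ‖xω (ωn n) t - x t‖) +
          ∫ t in (0:ℝ)..T, ‖deriv (xω (ωn n)) t - deriv x t‖) atTop (𝓝 0)) :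
    (inner ℝ v₀ (bdir B x₀) : ℝ) ^ 2 = ‖v₀‖ ^ 2 := by
  obtain ⟨hx0, hh0, hx', hh'⟩ := hlim
  have hBc : Continuous B := hB.1.continuous
  have hbdirc : Continuous (bdir B) := by
    show Continuous (fun y => ‖B y‖⁻¹ • B y)
    apply Continuous.fun_smul _ hBc
    exact (hBc.norm.inv₀ (fun y => norm_ne_zero_iff.2 (hB0 y)))
  have hhc : Continuous h :=
    Differentiable.continuous (fun t => (hh' t).differentiableAt)
  have hxc : Continuous x :=
    Differentiable.continuous (fun t => (hx' t).differentiableAt)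
  have hderivx : deriv x = fun t => h t • bdir B (x t) := by
    funext t; exact (hx' t).deriv
  have hdxc : Continuous (deriv x) := by
    rw [hderivx]; exact hhc.smul (hbdirc.comp hxc)
  set f : ℝ → ℝ := fun t => |‖v₀‖ - ‖deriv x t‖| with hf
  have hfc : Continuous f := (continuous_const.sub hdxc.norm).abs
  have hfnn : ∀ t, 0 ≤ f t := fun t => abs_nonneg _
  have hkey : ∀ n : ℕ, (∫ t in (0:ℝ)..T, f t) ≤
      ∫ t in (0:ℝ)..T, ‖deriv (xω (ωn n)) t - deriv x t‖ := by
    intro n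
    have hsol := hxω (ωn n) (hωpos n)
    have hvcont : Continuous (deriv (xω (ωn n))) :=
      Differentiable.continuous (fun t => (hsol.2.2.2 t).differentiableAt)
    apply intervalIntegral.integral_mono_on hT.le
      (hfc.intervalIntegrable 0 T) ((hvcont.sub hdxc).norm.intervalIntegrable 0 T)
    intro t _
    have hsp : ‖deriv (xω (ωn n)) t‖ = ‖v₀‖ := lorentz_speed_const B (ωn n) x₀ v₀ _ hsol t
    calc f t = |‖deriv (xω (ωn n)) t‖ - ‖deriv x t‖| := by rw [hf]; simp [hsp]
      _ ≤ ‖deriv (xω (ωn n)) t - deriv x t‖ := abs_norm_sub_norm_le _ _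
  have hb0 : Tendsto (fun n => ∫ t in (0:ℝ)..T, ‖deriv (xω (ωn n)) t - deriv x t‖)
      atTop (𝓝 0) := by
    apply squeeze_zero (fun n => intervalIntegral.integral_nonneg hT.le
      (fun t _ => norm_nonneg _)) _ hconv
    intro n
    have : (0:ℝ) ≤ ∫ t in (0:ℝ)..T, ‖xω (ωn n) t - x t‖ :=
      intervalIntegral.integral_nonneg hT.le (fun t _ => norm_nonneg _)
    linarith
  have hcle : (∫ t in (0:ℝ)..T, f t) ≤ 0 := ge_of_tendsto' hb0 hkey
  have hceq : (∫ t in (0:ℝ)..T, f t) = 0 :=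
    le_antisymm hcle (intervalIntegral.integral_nonneg hT.le (fun t _ => hfnn t))
  have hint : IntegrableOn f (Set.Ioc 0 T) := hfc.integrableOn_Ioc
  have hae : f =ᶠ[ae (volume.restrict (Set.Ioc 0 T))] 0 := by
    rw [← MeasureTheory.integral_eq_zero_iff_of_nonneg hfnn hint]
    rw [intervalIntegral.integral_of_le hT.le] at hceq
    exact hceq
  have hf0 : f 0 = 0 := by
    by_contra hne
    have hpos : 0 < f 0 := lt_of_le_of_ne (hfnn 0) (Ne.symm hne)
    obtain ⟨ε, hε, hball⟩ := Metric.continuousAt_iff.1 hfc.continuousAt (f 0 / 2) (by linarith)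
    set s := min ε T with hs
    have hspos : 0 < s := lt_min hε hT
    have hsub : Set.Ioo 0 s ⊆ {t | ¬ f t = 0} ∩ Set.Ioc 0 T := by
      intro t ht
      constructor
      · have hd : dist t 0 < ε := by
          rw [Real.dist_eq, sub_zero, abs_of_pos ht.1]
          exact lt_of_lt_of_le ht.2 (min_le_left _ _)
        have h3 := hball hd
        rw [Real.dist_eq] at h3
        have h4 := abs_lt.1 h3
        intro h0
        rw [h0] at h4
        simp at h4
        linarith [h4.1]
      · exact ⟨ht.1, le_of_lt (lt_of_lt_of_le ht.2 (min_le_right _ _))⟩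
    have hnull : volume.restrict (Set.Ioc 0 T) {t | ¬ f t = 0} = 0 := by
      have h5 := hae
      rw [Filter.EventuallyEq, ae_iff] at h5
      simpa using h5
    have h1 : volume.restrict (Set.Ioc 0 T) (Set.Ioo 0 s) = 0 :=
      measure_mono_null (fun t ht => (hsub ht).1) hnull
    rw [Measure.restrict_apply measurableSet_Ioo] at h1
    have h2 : Set.Ioo 0 s ∩ Set.Ioc 0 T = Set.Ioo 0 s := by
      apply Set.inter_eq_self_of_subset_left
      intro t ht; exact ⟨ht.1, le_of_lt (lt_of_lt_of_le ht.2 (min_le_right _ _))⟩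
    rw [h2, Real.volume_Ioo] at h1
    rw [ENNReal.ofReal_eq_zero] at h1
    linarith
  have hd0 : ‖deriv x 0‖ = |h 0| := by
    rw [hderivx]
    simp only [norm_smul, Real.norm_eq_abs]
    have hb1 : ‖bdir B (x 0)‖ = 1 := by
      rw [bdir, norm_smul, norm_inv, norm_norm,
        inv_mul_cancel₀ (norm_ne_zero_iff.2 (hB0 (x 0)))]
    rw [hb1, mul_one]
  have hveq : ‖v₀‖ = |h 0| := by
    have h6 := hf0
    rw [hf, abs_eq_zero, sub_eq_zero] at h6
    rw [h6, hd0]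
  rw [← hh0, ← sq_abs, ← hveq]
end
end
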